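/- For every numerical semigroup S with S ≠ ℕ, there exists a numerical semigroup T with T⁽²⁾ = S; explicitly, T = {0} ∪ ({x + m(S) : x ∈ S} \ {F(S) + 2m(S)}) is a numerical semigroup satisfying F(T) = F(S) + 2m(S), B(T) = F(S) + 2m(S) − 1, and T⁽²⁾ = S. -/
import Mathlib


open Set

def IsNumericalSet (S : Set ℕ) : Prop := 0 ∈ S ∧ Sᶜ.Finite

def IsNumericalSemigroup (S : Set ℕ) : Prop :=
  IsNumericalSet S ∧ ∀ a ∈ S, ∀ b ∈ S, a + b ∈ S

/-- The associated set `A(S) = {s ∈ S : s + S ⊆ S}`. -/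
def A (S : Set ℕ) : Set ℕ := {s ∈ S | ∀ t ∈ S, s + t ∈ S}

/-- The Frobenius number: the largest gap of `S`. -/
noncomputable def F (S : Set ℕ) : ℕ := sSup Sᶜ

/-- The base: the largest element of `S` below `F S`. -/
noncomputable def B (S : Set ℕ) : ℕ := sSup {s | s ∈ S ∧ s < F S}

/-- The multiplicity: the smallest positive element of `S`. -/
noncomputable def m (S : Set ℕ) : ℕ := sInf {s | s ∈ S ∧ 0 < s}

/-- The complement numerical set (for `S ≠ ℕ`). -/
noncomputable def Stilde (S : Set ℕ) : Set ℕ :=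
  {x | ∃ s ∈ S, s ≤ B S ∧ x = B S - s} ∪ {n | B S ≤ n}

-- The complement operation, with the convention that the complement of ℕ is ℕ.
open Classical in
noncomputable def complOp (S : Set ℕ) : Set ℕ :=
  if S = Set.univ then Set.univ else Stilde S

/-- The genus: the number of gaps. -/
noncomputable def genus (S : Set ℕ) : ℕ := Sᶜ.ncard

/-- The number of boxes with hook length 1. -/
noncomputable def c1 (S : Set ℕ) : ℕ := {n | n ∈ S ∧ n + 1 ∉ S}.ncard

/-- An atom: a positive element not a sum of two positive elements. -/
def IsAtomOf (S : Set ℕ) (a : ℕ) : Prop :=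
  a ∈ S ∧ 0 < a ∧ ¬ ∃ x ∈ S, ∃ y ∈ S, 0 < x ∧ 0 < y ∧ a = x + y

/-- A small atom: an atom smaller than the Frobenius number. -/
def IsSmallAtom (S : Set ℕ) (a : ℕ) : Prop := IsAtomOf S a ∧ a < F S

/-- The embedding dimension: the number of atoms. -/
noncomputable def numAtoms (S : Set ℕ) : ℕ := {a | IsAtomOf S a}.ncard

/-- Maximal embedding dimension. -/
def MaxED (S : Set ℕ) : Prop := numAtoms S = m S


lemma nat_sSup_eq {s : Set ℕ} {a : ℕ} (h1 : a ∈ s) (h2 : ∀ x ∈ s, x ≤ a) : sSup s = a :=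
  le_antisymm (csSup_le ⟨a, h1⟩ h2) (le_csSup ⟨a, h2⟩ h1)

theorem double_complement_surjective (S : Set ℕ) (hS : IsNumericalSemigroup S)
    (hne : S ≠ Set.univ) :
    IsNumericalSemigroup
        (insert 0 ({y | ∃ x ∈ S, y = x + m S} \ {F S + 2 * m S})) ∧
      F (insert 0 ({y | ∃ x ∈ S, y = x + m S} \ {F S + 2 * m S})) = F S + 2 * m S ∧
      B (insert 0 ({y | ∃ x ∈ S, y = x + m S} \ {F S + 2 * m S})) = F S + 2 * m S - 1 ∧
      complOp (complOp (insert 0 ({y | ∃ x ∈ S, y = x + m S} \ {F S + 2 * m S}))) = S := by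
  obtain ⟨⟨h0S, hfin⟩, hadd⟩ := hS
  have hcne : (Sᶜ).Nonempty := Set.nonempty_compl.mpr hne
  have hbdd : BddAbove Sᶜ := hfin.bddAbove
  have hFnS : F S ∉ S := Nat.sSup_mem hcne hbdd
  have hgt : ∀ n, F S < n → n ∈ S := by
    intro n hn
    by_contra h
    exact absurd (le_csSup hbdd h) (not_le.mpr hn)
  have hf1 : 1 ≤ F S := by
    rcases Nat.eq_zero_or_pos (F S) with h | h
    · exact absurd h0S (h ▸ hFnS)
    · exact h
  have hmne : {s | s ∈ S ∧ 0 < s}.Nonempty := ⟨F S + 1, hgt _ (Nat.lt_succ_self _), Nat.succ_pos _⟩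
  have hmm : m S ∈ S ∧ 0 < m S := Nat.sInf_mem hmne
  have h1S : (1 : ℕ) ∉ S := by
    intro h1
    apply hne
    ext n
    simp only [Set.mem_univ, iff_true]
    induction n with
    | zero => exact h0S
    | succ k ih => exact hadd k ih 1 h1
  have hm2 : 2 ≤ m S := by
    rcases hmm with ⟨hms, hmp⟩
    by_contra h
    have : m S = 1 := by omega
    exact h1S (this ▸ hms)
  set f := F S with hfdef
  set mm := m S with hmdef
  set T := insert 0 ({y | ∃ x ∈ S, y = x + mm} \ {f + 2 * mm}) with hTdef
  clear_value f mm
  have hT : ∀ y, y ∈ T ↔ y = 0 ∨ ((∃ x ∈ S, y = x + mm) ∧ y ≠ f + 2 * mm) := by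
    intro y
    simp [hTdef, Set.mem_insert_iff, Set.mem_diff]
  have hTbig : ∀ n, f + 2 * mm < n → n ∈ T := by
    intro n hn
    rw [hT]
    right
    exact ⟨⟨n - mm, hgt _ (by omega), by omega⟩, by omega⟩
  have hTtop : f + 2 * mm ∉ T := by
    rw [hT]
    push_neg
    exact ⟨by omega, fun _ => rfl⟩
  have hTsg : IsNumericalSemigroup T := by
    refine ⟨⟨Set.mem_insert _ _, ?_⟩, ?_⟩
    · apply Set.Finite.subset (Set.finite_Iic (f + 2 * mm))
      intro n hn
      simp only [Set.mem_compl_iff] at hn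
      by_contra hc
      simp only [Set.mem_Iic, not_le] at hc
      exact hn (hTbig n hc)
    · intro a ha b hb
      rw [hT] at ha hb ⊢
      rcases ha with rfl | ⟨⟨x, hx, rfl⟩, hne'⟩
      · simpa using hb
      rcases hb with rfl | ⟨⟨y, hy, rfl⟩, hne''⟩
      · right
        exact ⟨⟨x, hx, by omega⟩, by omega⟩
      · right
        refine ⟨⟨x + mm + y, hadd _ (hadd x hx mm hmm.1) y hy, by ring⟩, ?_⟩
        intro hEq
        have hxy : x + y = f := by omega
        exact hFnS (hxy ▸ hadd x hx y hy)
  have hFT : F T = f + 2 * mm := by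
    apply nat_sSup_eq
    · exact hTtop
    · intro n hn
      simp only [Set.mem_compl_iff] at hn
      by_contra hc
      exact hn (hTbig n (by omega))
  have hBT : B T = f + 2 * mm - 1 := by
    show sSup {s | s ∈ T ∧ s < F T} = _
    rw [hFT]
    apply nat_sSup_eq
    · refine ⟨(hT _).mpr (Or.inr ⟨⟨f + mm - 1, hgt _ (by omega), by omega⟩, by omega⟩), by omega⟩
    · rintro x ⟨_, hx⟩
      omega
  have hTne : T ≠ Set.univ := by
    intro h
    exact hTtop (h ▸ Set.mem_univ _)
  have hc1 : complOp T = Stilde T := by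
    unfold complOp
    rw [if_neg hTne]
  have hU : ∀ y, y ∈ Stilde T ↔
      (∃ x ∈ S, x ≤ f + mm - 1 ∧ y = f + mm - 1 - x) ∨ f + 2 * mm - 1 ≤ y := by
    intro y
    constructor
    · intro hy
      rcases hy with ⟨s, hsT, hsle, rfl⟩ | hge
      · rw [hBT] at hsle ⊢
        rw [hT] at hsT
        rcases hsT with rfl | ⟨⟨x, hx, rfl⟩, hne'⟩
        · right; omega
        · left
          exact ⟨x, hx, by omega, by omega⟩
      · right
        rw [hBT] at hge
        exact hge
    · intro hy
      rcases hy with ⟨x, hx, hxle, rfl⟩ | hge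
      · left
        refine ⟨x + mm, (hT _).mpr (Or.inr ⟨⟨x, hx, rfl⟩, by omega⟩), ?_, ?_⟩
        · rw [hBT]; omega
        · rw [hBT]; omega
      · right
        show B T ≤ y
        rw [hBT]
        exact hge
  have hFU : F (Stilde T) = f + 2 * mm - 2 := by
    apply nat_sSup_eq
    · rw [Set.mem_compl_iff, hU]
      push_neg
      constructor
      · rintro x hx hxle
        omega
      · omega
    · intro n hn
      rw [Set.mem_compl_iff, hU] at hn
      push_neg at hn
      omega
  have hBU : B (Stilde T) = f + mm - 1 := by
    show sSup {s | s ∈ Stilde T ∧ s < F (Stilde T)} = _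
    rw [hFU]
    apply nat_sSup_eq
    · exact ⟨(hU _).mpr (Or.inl ⟨0, h0S, by omega, by omega⟩), by omega⟩
    · rintro y ⟨hy, hlt⟩
      rw [hU] at hy
      rcases hy with ⟨x, hx, hxle, rfl⟩ | hge
      · exact Nat.sub_le _ _
      · omega
  have hUne : Stilde T ≠ Set.univ := by
    intro h
    have hmem : f + mm ∈ Stilde T := h ▸ Set.mem_univ _
    rw [hU] at hmem
    rcases hmem with ⟨x, hx, hxle, heq⟩ | hge
    · omega
    · omega
  have hc2 : complOp (Stilde T) = Stilde (Stilde T) := by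
    unfold complOp
    rw [if_neg hUne]
  have hfinal : Stilde (Stilde T) = S := by
    ext y
    constructor
    · intro hy
      rcases hy with ⟨u, huU, hule, rfl⟩ | hge
      · rw [hBU] at hule ⊢
        rw [hU] at huU
        rcases huU with ⟨x, hx, hxle, rfl⟩ | hge
        · have hxx : f + mm - 1 - (f + mm - 1 - x) = x := by omega
          rw [hxx]
          exact hx
        · omega
      · rw [hBU] at hge
        exact hgt y (lt_of_lt_of_le (by omega) hge)
    · intro hy
      by_cases h : f + mm - 1 ≤ y
      · right
        show B (Stilde T) ≤ y
        rw [hBU]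
        exact h
      · left
        refine ⟨f + mm - 1 - y, (hU _).mpr (Or.inl ⟨y, hy, by omega, rfl⟩), ?_, ?_⟩
        · rw [hBU]; omega
        · rw [hBU]; omega
  refine ⟨hTsg, hFT, hBT, ?_⟩
  rw [hc1, hc2, hfinal]
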